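/- Let R be a finite commutative ring with identity, n ≥ 1, and let N_1, ..., N_k be a collection of ideals of R satisfying the CNC-condition. Then |(M_n(R))*| = |(M_n(R/N_1))*| · |N_1|^{n²}. -/

import Mathlib

theorem card_matrix_units_of_nilpotent {R : Type*} [CommRing R] [Finite R] (n : ℕ)
    (I : Ideal R) (hI : IsNilpotent I) :
    Nat.card (Matrix (Fin n) (Fin n) R)ˣ =
      Nat.card (Matrix (Fin n) (Fin n) (R ⧸ I))ˣ * Nat.card I ^ (n ^ 2) := by
  classical
  obtain ⟨m, hm⟩ := hI
  -- elements of I are nilpotent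
  have hnil : ∀ z ∈ I, IsNilpotent z := by
    intro z hz
    exact ⟨m, by
      have := Ideal.pow_mem_pow hz m
      rw [hm] at this
      simpa using this⟩
  -- units lift along the quotient map
  have hu : ∀ x : R, IsUnit (Ideal.Quotient.mk I x) → IsUnit x := by
    intro x hx
    obtain ⟨y', hy'⟩ := isUnit_iff_exists_inv.mp hx
    obtain ⟨y, rfl⟩ := Ideal.Quotient.mk_surjective y'
    rw [← _root_.map_mul, ← _root_.map_one (Ideal.Quotient.mk I), Ideal.Quotient.eq] at hy'
    have : IsUnit (x * y) := by
      have : x * y = 1 + (x * y - 1) := by ring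
      rw [this]
      exact IsNilpotent.isUnit_one_add (hnil _ hy')
    exact isUnit_of_mul_isUnit_left this
  set f : Matrix (Fin n) (Fin n) R →+* Matrix (Fin n) (Fin n) (R ⧸ I) :=
    (Ideal.Quotient.mk I).mapMatrix with hf
  have hU : ∀ X : Matrix (Fin n) (Fin n) R, IsUnit (f X) → IsUnit X := by
    intro X hX
    rw [Matrix.isUnit_iff_isUnit_det] at hX ⊢
    apply hu
    rw [RingHom.map_det]
    simpa [hf, RingHom.mapMatrix_apply] using hX
  set φ : (Matrix (Fin n) (Fin n) R)ˣ →* (Matrix (Fin n) (Fin n) (R ⧸ I))ˣ :=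
    Units.map f.toMonoidHom with hφ
  have hfsurj : Function.Surjective f := by
    intro Y
    refine ⟨Matrix.of fun i j => (Ideal.Quotient.mk_surjective (Y i j)).choose, ?_⟩
    ext i j
    exact (Ideal.Quotient.mk_surjective (Y i j)).choose_spec
  have hsurj : Function.Surjective φ := by
    intro u
    obtain ⟨X, hX⟩ := hfsurj u.val
    have hXu : IsUnit X := hU X (hX ▸ u.isUnit)
    refine ⟨hXu.unit, Units.ext ?_⟩
    show f hXu.unit.val = u.val
    rw [hXu.unit_spec, hX]
  -- the unit condition on 1 + matrix over I
  have hone : ∀ A : Fin n → Fin n → I,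
      f (1 + Matrix.of fun i j => ((A i j : R))) = 1 := by
    intro A
    rw [_root_.map_add, _root_.map_one]
    convert add_zero (1 : Matrix (Fin n) (Fin n) (R ⧸ I)) using 2
    ext i j
    simpa [hf, RingHom.mapMatrix_apply] using Ideal.Quotient.eq_zero_iff_mem.mpr (A i j).2
  have hU2 : ∀ A : Fin n → Fin n → I,
      IsUnit (1 + Matrix.of fun i j => ((A i j : R))) := by
    intro A
    exact hU _ (by rw [hone A]; exact isUnit_one)
  -- kernel is in bijection with matrices over I
  have hker : ∀ u : (Matrix (Fin n) (Fin n) R)ˣ, u ∈ φ.ker ↔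
      ∀ i j, (u.val i j - (1 : Matrix (Fin n) (Fin n) R) i j) ∈ I := by
    intro u
    rw [MonoidHom.mem_ker, Units.ext_iff]
    show f u.val = 1 ↔ _
    constructor
    · intro h i j
      rw [← Ideal.Quotient.eq]
      have : f u.val i j = (1 : Matrix (Fin n) (Fin n) (R ⧸ I)) i j := by rw [h]
      simp only [hf, RingHom.mapMatrix_apply, Matrix.map_apply] at this
      rw [this]
      by_cases hij : i = j <;> simp [Matrix.one_apply, hij]
    · intro h
      ext i j
      have := (Ideal.Quotient.eq (I := I)).mpr (h i j)
      simp only [hf, RingHom.mapMatrix_apply, Matrix.map_apply]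
      rw [this]
      by_cases hij : i = j <;> simp [Matrix.one_apply, hij]
  let e : φ.ker ≃ (Fin n → Fin n → I) :=
    { toFun := fun u => fun i j => ⟨u.val.val i j - (1 : Matrix (Fin n) (Fin n) R) i j,
        (hker u.val).mp u.2 i j⟩
      invFun := fun A => ⟨(hU2 A).unit, (hker _).mpr (by
        intro i j
        rw [(hU2 A).unit_spec]
        simpa using (A i j).2)⟩
      left_inv := by
        intro u
        apply Subtype.ext
        apply Units.ext
        rw [(hU2 _).unit_spec]
        ext i j
        simp
      right_inv := by
        intro A
        funext i j
        apply Subtype.ext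
        simp [(hU2 A).unit_spec] }
  rw [Subgroup.card_eq_card_quotient_mul_card_subgroup φ.ker]
  congr 1
  · exact Nat.card_congr (QuotientGroup.quotientKerEquivOfSurjective φ hsurj).toEquiv
  · rw [Nat.card_congr e, Nat.card_fun, Nat.card_fun, Nat.card_eq_fintype_card (α := Fin n),
      Fintype.card_fin, ← pow_mul, sq]


/-- Let `R` be a finite commutative ring with identity,
`n ≥ 1`, and `N 1, ..., N k` ideals of `R` satisfying the CNC-condition.  Then
`|Mₙ(R)ˣ| = |Mₙ(R/N 1)ˣ| * |N 1| ^ (n²)`. -/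
theorem cnc_card_matrix_units {R : Type*} [CommRing R] [Finite R] (n : ℕ) (hn : 1 ≤ n)
    (k : ℕ) (hk : 1 ≤ k) (N : ℕ → Ideal R) (t s : ℕ → ℕ)
    (hbot : N k = ⊥)
    (hchain : ∀ i, 1 ≤ i → i < k → N (i + 1) ≤ N i)
    (ht : ∀ i, 1 ≤ i → i < k → 2 ≤ t i)
    (hnil : ∀ i, 1 ≤ i → i < k → N i ^ t i ≤ N (i + 1))
    (hs : ∀ i, 1 ≤ i → i < k → 1 ≤ s i)
    (hchar : ∀ i, 1 ≤ i → i < k → ∀ x ∈ N i, s i • x ∈ N (i + 1))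
    (hfac : ∀ i, 1 ≤ i → i < k → ∀ p : ℕ, p.Prime → p ∣ s i → t i ≤ p) :
    Nat.card (Matrix (Fin n) (Fin n) R)ˣ =
      Nat.card (Matrix (Fin n) (Fin n) (R ⧸ N 1))ˣ * Nat.card (N 1) ^ (n ^ 2) := by
  have key : ∀ j i, 1 ≤ i → i ≤ k → k ≤ i + j → IsNilpotent (N i) := by
    intro j
    induction j with
    | zero =>
      intro i h1 h2 h3
      have : i = k := le_antisymm h2 (by simpa using h3)
      exact ⟨1, by simp [this, hbot]⟩
    | succ j ih =>
      intro i h1 h2 h3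
      rcases eq_or_lt_of_le h2 with rfl | hlt
      · exact ⟨1, by simp [hbot]⟩
      · obtain ⟨m, hm⟩ := ih (i + 1) (by omega) (by omega) (by omega)
        refine ⟨t i * m, ?_⟩
        have h1' : N i ^ (t i * m) ≤ (N (i + 1)) ^ m := by
          rw [pow_mul]
          exact Ideal.pow_right_mono (hnil i h1 hlt) m
        rw [hm] at h1'
        simpa using h1'
  exact card_matrix_units_of_nilpotent n (N 1) (key k 1 le_rfl hk (by omega))
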